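/- For every propositional base K and every formula φ, if K ⊩₁ φ then K ⊢_{LPm} φ. -/
import Mathlib


namespace Occ

/-- Propositional formulas over variables indexed by `ℕ`,
built from variables using negation and conjunction. -/
inductive Form : Type where
  | var : ℕ → Form
  | neg : Form → Form
  | conj : Form → Form → Form
deriving DecidableEq

/-- Boolean evaluation of a formula under an interpretation `w`. -/
def eval (w : ℕ → Bool) : Form → Bool
  | .var p => w p
  | .neg φ => !(eval w φ)
  | .conj φ ψ => eval w φ && eval w ψ

/-- The variables occurring in a formula. -/
def vars : Form → Finset ℕ
  | .var p => {p}
  | .neg φ => vars φ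
  | .conj φ ψ => vars φ ∪ vars ψ

/-- A step in a path addressing a subformula occurrence. -/
inductive Step : Type where
  | neg | left | right
deriving DecidableEq

/-- `occAt φ l pol = some (p, pol')` iff the path `l` addresses an occurrence of the
variable `p` in `φ`, and this occurrence has polarity `pol'` (`true` = positive)
when the ambient polarity of `φ` is `pol`. -/
def occAt : Form → List Step → Bool → Option (ℕ × Bool)
  | .var p, [], pol => some (p, pol)
  | .neg φ, .neg :: l, pol => occAt φ l (!pol)
  | .conj φ _, .left :: l, pol => occAt φ l pol
  | .conj _ ψ, .right :: l, pol => occAt ψ l pol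
  | _, _, _ => none

/-- A variable occurrence in a base: a formula together with a path into it. -/
abbrev Occurrence : Type := Form × List Step

/-- A propositional base: a finite set of formulas. -/
abbrev PB : Type := Finset Form

/-- `o` is a variable occurrence in the base `K`. -/
def IsOcc (K : PB) (o : Occurrence) : Prop :=
  o.1 ∈ K ∧ ∃ p pol, occAt o.1 o.2 true = some (p, pol)

/-- `o` is an occurrence of the variable `p` in `K`, of polarity `pol`. -/
def IsOccOf (K : PB) (o : Occurrence) (p : ℕ) (pol : Bool) : Prop :=
  o.1 ∈ K ∧ occAt o.1 o.2 true = some (p, pol)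

/-- `o` is an occurrence of the variable `p` in `K`. -/
def IsOccVar (K : PB) (o : Occurrence) (p : ℕ) : Prop :=
  ∃ pol, IsOccOf K o p pol

/-- `o` is a positive variable occurrence in `K`. -/
def IsPosOcc (K : PB) (o : Occurrence) : Prop := ∃ p, IsOccOf K o p true

/-- `o` is a negative variable occurrence in `K`. -/
def IsNegOcc (K : PB) (o : Occurrence) : Prop := ∃ p, IsOccOf K o p false

/-- `o` and `o'` are occurrences of the same variable. -/
def sameVar (o o' : Occurrence) : Prop :=
  ∃ p pol pol', occAt o.1 o.2 true = some (p, pol) ∧ occAt o'.1 o'.2 true = some (p, pol')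

/-- The variables occurring in a base. -/
def varsPB (K : PB) : Finset ℕ := K.sup vars

/-- `w` is a (Boolean) model of the base `K` (i.e. of the conjunction of its formulas). -/
def modelsPB (w : ℕ → Bool) (K : PB) : Prop := ∀ φ ∈ K, eval w φ = true

/-- A base is consistent iff the conjunction of its formulas has a model. -/
def ConsistentPB (K : PB) : Prop := ∃ w, modelsPB w K

/-- Classical entailment from a base. -/
def Entails (K : PB) (φ : Form) : Prop := ∀ w, modelsPB w K → eval w φ = true

/-- Rename every variable occurrence of a formula, the new variable of the
occurrence at path `l` being `f l`. -/
def renameBy : (List Step → ℕ) → Form → Form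
  | f, .var _ => .var (f [])
  | f, .neg φ => .neg (renameBy (fun l => f (.neg :: l)) φ)
  | f, .conj φ ψ =>
      .conj (renameBy (fun l => f (.left :: l)) φ) (renameBy (fun l => f (.right :: l)) ψ)

/-- The formula `φ` (viewed as a member of a base) with each occurrence `o`
replaced by the variable `R o`. -/
def renameForm (R : Occurrence → ℕ) (φ : Form) : Form :=
  renameBy (fun l => R (φ, l)) φ

/-- A C-renaming of `K`: it assigns a pairwise distinct fresh variable to each
occurrence of `K`. -/
structure IsCRenaming (K : PB) (R : Occurrence → ℕ) : Prop where
  fresh : ∀ o, IsOcc K o → R o ∉ varsPB K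
  inj : ∀ o o', IsOcc K o → IsOcc K o' → R o = R o' → o = o'

/-- Binary relations on occurrences, viewed as sets of ordered pairs. -/
abbrev Rel : Type := Set (Occurrence × Occurrence)

/-- `r` is an equivalence relation on `Occ(K)`. -/
structure IsEquivOn (K : PB) (r : Rel) : Prop where
  dom : ∀ q ∈ r, IsOcc K q.1 ∧ IsOcc K q.2
  refl : ∀ o, IsOcc K o → (o, o) ∈ r
  symm : ∀ q ∈ r, (q.2, q.1) ∈ r
  trans : ∀ a b c : Occurrence, (a, b) ∈ r → (b, c) ∈ r → (a, c) ∈ r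

/-- Compliance: related occurrences are occurrences of the same variable. -/
def Compliant (r : Rel) : Prop := ∀ q ∈ r, sameVar q.1 q.2

/-- Consistency of the formula `⋀R(K) ∧ ⋀_{(o,o')∈r} (R(o) ↔ R(o'))`. -/
def RelConsistent (K : PB) (R : Occurrence → ℕ) (r : Rel) : Prop :=
  ∃ w : ℕ → Bool, (∀ φ ∈ K, eval w (renameForm R φ) = true) ∧
    ∀ q ∈ r, w (R q.1) = w (R q.2)

/-- Minimal Inconsistency Relation of `K` (w.r.t. the C-renaming `R`). -/
def IsMIR (K : PB) (R : Occurrence → ℕ) (r : Rel) : Prop :=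
  IsEquivOn K r ∧ Compliant r ∧ ¬ RelConsistent K R r ∧
    ∀ r', IsEquivOn K r' → Compliant r' → ¬ RelConsistent K R r' → ¬ r' ⊂ r

/-- Maximal Consistency Relation of `K` (w.r.t. the C-renaming `R`). -/
def IsMCR (K : PB) (R : Occurrence → ℕ) (r : Rel) : Prop :=
  IsEquivOn K r ∧ Compliant r ∧ RelConsistent K R r ∧
    ∀ r', IsEquivOn K r' → Compliant r' → RelConsistent K R r' → ¬ r ⊂ r'

/-- The relation `∼_c^K`: relating occurrences of `K` of the same variable. -/
def sameVarRel (K : PB) : Rel :=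
  {q | IsOcc K q.1 ∧ IsOcc K q.2 ∧ sameVar q.1 q.2}

/-- `PN(r)`: related pairs consisting of a positive and a negative occurrence. -/
def PN (K : PB) (r : Rel) : Rel :=
  {q | q ∈ r ∧ IsPosOcc K q.1 ∧ IsNegOcc K q.2}

/-- A BMCR: an MCR satisfying Maximality-2. -/
def IsBMCR (K : PB) (R : Occurrence → ℕ) (r : Rel) : Prop :=
  IsMCR K R r ∧
    ∀ r', IsEquivOn K r' → Compliant r' → RelConsistent K R r' → ¬ PN K r ⊂ PN K r'

/-- `H` is a hitting set of the collection `S`. -/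
def IsHittingSet {α : Type} (S : Set (Set α)) (H : Set α) : Prop :=
  ∀ s ∈ S, (s ∩ H).Nonempty

/-- `H` is a minimal hitting set of the collection `S`. -/
def IsMinHittingSet {α : Type} (S : Set (Set α)) (H : Set α) : Prop :=
  IsHittingSet S H ∧ ∀ H', H' ⊂ H → ¬ IsHittingSet S H'

/-- `r` is `H`-maximal (for an equivalence relation `r ⊆ ∼_c^K`). -/
def IsHMaximal (K : PB) (H r : Rel) : Prop :=
  r ∩ H = ∅ ∧
    ∀ r', IsEquivOn K r' → r' ⊆ sameVarRel K → r ⊂ r' → (r' ∩ H).Nonempty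

/-- `r` is `H`-minimal (for an equivalence relation `r ⊆ ∼_c^K`). -/
def IsHMinimal (K : PB) (H r : Rel) : Prop :=
  H ⊆ r ∧ ∀ r', IsEquivOn K r' → r' ⊂ r → ¬ H ⊆ r'

/-- The set of all MIRs of `K`. -/
def MIRs (K : PB) (R : Occurrence → ℕ) : Set Rel := {r | IsMIR K R r}

/-- The set of all C-MCRs of `K`: relations `θ ⊆ ∼_c^K` with `∼_c^K ∖ θ` an MCR. -/
def CMCRs (K : PB) (R : Occurrence → ℕ) : Set Rel :=
  {θ | θ ⊆ sameVarRel K ∧ IsMCR K R (sameVarRel K \ θ)}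

/-- `ρ` is a `∼`-renaming for the equivalence relation `r` on `Occ(K)`:
it assigns a distinct variable to each equivalence class (so it is constant on
classes and distinguishes distinct classes), and any class containing all the
occurrences of a variable `p` is mapped to `p` itself. -/
def IsClassRenaming (K : PB) (r : Rel) (ρ : Occurrence → ℕ) : Prop :=
  (∀ o o', IsOcc K o → IsOcc K o' → (ρ o = ρ o' ↔ (o, o') ∈ r)) ∧
    (∀ o p, IsOccVar K o p → (∀ o', IsOccVar K o' p → (o, o') ∈ r) → ρ o = p)

/-- `σ` encodes a tuple `(q₁,…,q_m) ∈ P(ρ_∼, S)` where `S = (p₁,…,p_m)`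
enumerates `var(K) ∩ var(φ)`: it maps each shared variable `p` to a member of
`⌈ρ⌉(p)` and is the identity elsewhere. -/
def IsTupleChoice (K : PB) (φ : Form) (ρ : Occurrence → ℕ) (σ : ℕ → ℕ) : Prop :=
  (∀ p, p ∈ varsPB K → p ∈ vars φ → ∃ o, IsOccVar K o p ∧ σ p = ρ o) ∧
    (∀ p, ¬ (p ∈ varsPB K ∧ p ∈ vars φ) → σ p = p)

/-- Simultaneous substitution of variables by variables. -/
def substV (σ : ℕ → ℕ) : Form → Form
  | .var p => .var (σ p)
  | .neg φ => .neg (substV σ φ)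
  | .conj φ ψ => .conj (substV σ φ) (substV σ ψ)

/-- `ρ_∼(K) ⊢ ψ`. -/
def rhoEntails (K : PB) (ρ : Occurrence → ℕ) (ψ : Form) : Prop :=
  ∀ w : ℕ → Bool, (∀ φ ∈ K, eval w (renameForm ρ φ) = true) → eval w ψ = true

/-- The inference relation `K ⊩₁ φ`. -/
def Inf1 (K : PB) (R : Occurrence → ℕ) (φ : Form) : Prop :=
  ∀ r ρ, IsMCR K R r → IsClassRenaming K r ρ →
    ∃ σ, IsTupleChoice K φ ρ σ ∧ rhoEntails K ρ (substV σ φ)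

/-- The inference relation `K ⊩₂ φ`. -/
def Inf2 (K : PB) (R : Occurrence → ℕ) (φ : Form) : Prop :=
  ∀ r ρ, IsMCR K R r → IsClassRenaming K r ρ →
    ∀ σ, IsTupleChoice K φ ρ σ → rhoEntails K ρ (substV σ φ)

/-- The inference relation `K ⊩₁^B φ`. -/
def Inf1B (K : PB) (R : Occurrence → ℕ) (φ : Form) : Prop :=
  ∀ r ρ, IsBMCR K R r → IsClassRenaming K r ρ →
    ∃ σ, IsTupleChoice K φ ρ σ ∧ rhoEntails K ρ (substV σ φ)

/-- The inference relation `K ⊩₂^B φ`. -/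
def Inf2B (K : PB) (R : Occurrence → ℕ) (φ : Form) : Prop :=
  ∀ r ρ, IsBMCR K R r → IsClassRenaming K r ρ →
    ∀ σ, IsTupleChoice K φ ρ σ → rhoEntails K ρ (substV σ φ)

/-- `μ` is an o-model of `K`: any interpretation `w` with `w (R o) = μ o` for all
occurrences `o` of `K` is a model of `⋀R(K)`. -/
def OModel (K : PB) (R : Occurrence → ℕ) (μ : Occurrence → Bool) : Prop :=
  ∀ w : ℕ → Bool, (∀ o, IsOcc K o → w (R o) = μ o) →
    ∀ φ ∈ K, eval w (renameForm R φ) = true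

/-- `diff_a(μ)`: pairs of occurrences of the same variable on which `μ` differs. -/
def diffA (K : PB) (μ : Occurrence → Bool) : Rel :=
  {q | IsOcc K q.1 ∧ IsOcc K q.2 ∧ sameVar q.1 q.2 ∧ μ q.1 ≠ μ q.2}

/-- `μ` is an a-minimal o-model of `K`. -/
def AMinOModel (K : PB) (R : Occurrence → ℕ) (μ : Occurrence → Bool) : Prop :=
  OModel K R μ ∧ ∀ μ', OModel K R μ' → ¬ diffA K μ' ⊂ diffA K μ

/-- A Boolean interpretation `w` is compatible with an o-interpretation `μ`. -/
def Compatible (K : PB) (μ : Occurrence → Bool) (w : ℕ → Bool) : Prop :=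
  ∀ p ∈ varsPB K, ∃ o, IsOccVar K o p ∧ w p = μ o

/-- The inference relation `K ⊩_{a1} φ`. -/
def InfA1 (K : PB) (R : Occurrence → ℕ) (φ : Form) : Prop :=
  ∀ μ, AMinOModel K R μ → ∃ w, Compatible K μ w ∧ eval w φ = true

/-- The inference relation `K ⊩_{a2} φ`. -/
def InfA2 (K : PB) (R : Occurrence → ℕ) (φ : Form) : Prop :=
  ∀ μ, AMinOModel K R μ → ∀ w, Compatible K μ w → eval w φ = true

/-- LP_m evaluation: an LP_m interpretation assigns a (nonempty) set of truth
values to each variable; it extends to formulas pointwise. -/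
def lpEval (lam : ℕ → Set Bool) : Form → Set Bool
  | .var p => lam p
  | .neg φ => (fun v => !v) '' lpEval lam φ
  | .conj φ ψ => Set.image2 (· && ·) (lpEval lam φ) (lpEval lam ψ)

/-- `lam` is an LP_m interpretation: each variable gets a nonempty set of values. -/
def IsLPInterp (lam : ℕ → Set Bool) : Prop := ∀ p, (lam p).Nonempty

/-- `lam` is an LP_m model of `⋀K`. -/
def LPModelPB (lam : ℕ → Set Bool) (K : PB) : Prop := ∀ φ ∈ K, true ∈ lpEval lam φ

/-- `λ! = {p : λ(p) = {0,1}}`. -/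
def lpBang (lam : ℕ → Set Bool) : Set ℕ := {p | lam p = Set.univ}

/-- `lam` is a minimal LP_m model of `⋀K`. -/
def MinLPModelPB (K : PB) (lam : ℕ → Set Bool) : Prop :=
  IsLPInterp lam ∧ LPModelPB lam K ∧
    ∀ lam', IsLPInterp lam' → LPModelPB lam' K → ¬ lpBang lam' ⊂ lpBang lam

/-- `K ⊢_{LPm} φ`. -/
def LPmEntails (K : PB) (φ : Form) : Prop :=
  ∀ lam, MinLPModelPB K lam → true ∈ lpEval lam φ

/-- Replace the subformula occurrence of `φ` addressed by the path `l` by `ψ`. -/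
def replaceAt : Form → List Step → Form → Form
  | _, [], ψ => ψ
  | .neg φ, .neg :: l, ψ => .neg (replaceAt φ l ψ)
  | .conj φ χ, .left :: l, ψ => .conj (replaceAt φ l ψ) χ
  | .conj φ χ, .right :: l, ψ => .conj φ (replaceAt χ l ψ)
  | φ, _, _ => φ

/-- The equivalence relation `∼_λ` induced on `Occ(K)` by an LP_m interpretation:
its classes are `Occ(p,K)` for `|λ(p)| = 1` and `PosOcc(p,K)`, `NegOcc(p,K)` for
`λ(p) = {0,1}`. -/
def lamRel (K : PB) (lam : ℕ → Set Bool) : Rel :=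
  {q | ∃ p pol pol', IsOccOf K q.1 p pol ∧ IsOccOf K q.2 p pol' ∧
    (lam p = Set.univ → pol = pol')}

open scoped Classical in
/-- The o-interpretation `μ_λ^K` associated with an LP_m interpretation `λ`. -/
noncomputable def muOf (lam : ℕ → Set Bool) (o : Occurrence) : Bool :=
  match occAt o.1 o.2 true with
  | some (p, pol) =>
      if lam p = ({false} : Set Bool) then false
      else if lam p = ({true} : Set Bool) then true
      else pol
  | none => false

lemma occAt_mem_vars : ∀ (φ : Form) (l : List Step) (pol : Bool) {p : ℕ} {pol' : Bool},
    occAt φ l pol = some (p, pol') → p ∈ vars φ := by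
  intro φ
  induction φ with
  | var q =>
      intro l pol p pol' h
      cases l with
      | nil => simp [occAt] at h; simp [vars, h.1]
      | cons s l => cases s <;> simp [occAt] at h
  | neg ψ ih =>
      intro l pol p pol' h
      cases l with
      | nil => simp [occAt] at h
      | cons s l => cases s <;> simp [occAt] at h; exact ih l _ h
  | conj ψ χ ih1 ih2 =>
      intro l pol p pol' h
      cases l with
      | nil => simp [occAt] at h
      | cons s l =>
          cases s with
          | neg => simp [occAt] at h
          | left => simp only [occAt] at h; simp only [vars, Finset.mem_union]
                    exact Or.inl (ih1 l _ h)
          | right => simp only [occAt] at h; simp only [vars, Finset.mem_union]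
                     exact Or.inr (ih2 l _ h)

lemma mem_vars_occAt : ∀ (φ : Form) {p : ℕ}, p ∈ vars φ → ∀ pol : Bool,
    ∃ l pol', occAt φ l pol = some (p, pol') := by
  intro φ
  induction φ with
  | var q => intro p hp pol; simp [vars] at hp; exact ⟨[], pol, by simp [occAt, hp]⟩
  | neg ψ ih =>
      intro p hp pol
      obtain ⟨l, pol', h⟩ := ih hp (!pol)
      exact ⟨.neg :: l, pol', h⟩
  | conj ψ χ ih1 ih2 =>
      intro p hp pol
      simp [vars] at hp
      rcases hp with hp | hp
      · obtain ⟨l, pol', h⟩ := ih1 hp pol; exact ⟨.left :: l, pol', h⟩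
      · obtain ⟨l, pol', h⟩ := ih2 hp pol; exact ⟨.right :: l, pol', h⟩

lemma setBool_cases (s : Set Bool) :
    s = ∅ ∨ s = {false} ∨ s = {true} ∨ s = Set.univ := by
  by_cases hf : false ∈ s <;> by_cases ht : true ∈ s
  · right; right; right; ext x; cases x <;> simp [hf, ht]
  · right; left; ext x; cases x <;> simp [hf, ht]
  · right; right; left; ext x; cases x <;> simp [hf, ht]
  · left; ext x; cases x <;> simp [hf, ht]

open scoped Classical in
noncomputable def muVal (lam : ℕ → Set Bool) (p : ℕ) (pol : Bool) : Bool :=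
  if lam p = ({false} : Set Bool) then false
  else if lam p = ({true} : Set Bool) then true
  else pol

lemma muOf_eq {lam : ℕ → Set Bool} {o : Occurrence} {p : ℕ} {pol : Bool}
    (h : occAt o.1 o.2 true = some (p, pol)) : muOf lam o = muVal lam p pol := by
  simp [muOf, muVal, h]

lemma muVal_of_ne {lam : ℕ → Set Bool} {p : ℕ}
    (h1 : lam p ≠ ({false} : Set Bool)) (h2 : lam p ≠ ({true} : Set Bool)) (pol : Bool) :
    muVal lam p pol = pol := by
  simp [muVal, h1, h2]

lemma univ_ne_false : (Set.univ : Set Bool) ≠ {false} := by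
  intro h
  have : true ∈ ({false} : Set Bool) := h ▸ Set.mem_univ true
  simp at this

lemma univ_ne_true : (Set.univ : Set Bool) ≠ {true} := by
  intro h
  have : false ∈ ({true} : Set Bool) := h ▸ Set.mem_univ false
  simp at this

lemma muVal_of_univ {lam : ℕ → Set Bool} {p : ℕ} (h : lam p = Set.univ) (pol : Bool) :
    muVal lam p pol = pol :=
  muVal_of_ne (h ▸ univ_ne_false) (h ▸ univ_ne_true) pol

lemma muVal_mem {lam : ℕ → Set Bool} {p : ℕ} (hne : (lam p).Nonempty) (pol : Bool) :
    muVal lam p pol ∈ lam p := by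
  rcases setBool_cases (lam p) with h | h | h | h
  · exact absurd h hne.ne_empty
  · simp [muVal, h]
  · have hne' : lam p ≠ ({false} : Set Bool) := by
      rw [h]; intro hc
      have : true ∈ ({false} : Set Bool) := hc ▸ rfl
      simp at this
    simp [muVal, h, hne']
  · simp [h]

lemma evalRename_muVal (lam : ℕ → Set Bool) :
    ∀ (φ : Form) (pol : Bool) (f : List Step → ℕ) (w : ℕ → Bool),
    (∀ l p pol', occAt φ l pol = some (p, pol') → w (f l) = muVal lam p pol') →
    pol ∈ lpEval lam φ → eval w (renameBy f φ) = pol := by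
  intro φ
  induction φ with
  | var q =>
      intro pol f w hw hm
      have h := hw [] q pol (by simp [occAt])
      have hm' : pol ∈ lam q := hm
      simp only [renameBy, eval]
      rw [h]
      rcases setBool_cases (lam q) with hq | hq | hq | hq
      · exact absurd (hq ▸ hm') (by simp)
      · have hpol : pol = false := by have := hq ▸ hm'; simpa using this
        simp [muVal, hq, hpol]
      · have hpol : pol = true := by have := hq ▸ hm'; simpa using this
        have hne : lam q ≠ ({false} : Set Bool) := by
          rw [hq]; intro hc
          have : true ∈ ({false} : Set Bool) := hc ▸ rfl
          simp at this
        simp [muVal, hq, hpol, hne]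
      · exact muVal_of_univ hq pol
  | neg ψ ih =>
      intro pol f w hw hm
      obtain ⟨v, hv, hveq⟩ := (Set.mem_image _ _ _).mp hm
      have hwψ : ∀ l p pol', occAt ψ l v = some (p, pol') →
          w (f (.neg :: l)) = muVal lam p pol' := by
        intro l p pol' hh
        refine hw (.neg :: l) p pol' ?_
        show occAt ψ l (!pol) = some (p, pol')
        rw [← hveq, Bool.not_not]
        exact hh
      have heq := ih v (fun l => f (.neg :: l)) w hwψ hv
      simp only [renameBy, eval, heq, ← hveq]
  | conj ψ χ ih1 ih2 =>
      intro pol f w hw hm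
      obtain ⟨v, hv, v', hv', hveq⟩ := Set.mem_image2.mp hm
      simp only [renameBy, eval]
      cases pol with
      | true =>
          obtain ⟨rfl, rfl⟩ : v = true ∧ v' = true := (Bool.and_eq_true _ _).mp hveq
          rw [ih1 true (fun l => f (.left :: l)) w
                (fun l p pol' hh => hw (.left :: l) p pol' hh) hv,
              ih2 true (fun l => f (.right :: l)) w
                (fun l p pol' hh => hw (.right :: l) p pol' hh) hv']
          rfl
      | false =>
          have : v = false ∨ v' = false := by
            cases v <;> cases v' <;> simp at hveq <;> simp
          rcases this with rfl | rfl
          · rw [ih1 false (fun l => f (.left :: l)) w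
                (fun l p pol' hh => hw (.left :: l) p pol' hh) hv]
            simp
          · rw [ih2 false (fun l => f (.right :: l)) w
                (fun l p pol' hh => hw (.right :: l) p pol' hh) hv']
            simp

lemma evalRename_mem (lam : ℕ → Set Bool) :
    ∀ (φ : Form) (pol : Bool) (f : List Step → ℕ) (w : ℕ → Bool),
    (∀ l p pol', occAt φ l pol = some (p, pol') → w (f l) ∈ lam p) →
    eval w (renameBy f φ) ∈ lpEval lam φ := by
  intro φ
  induction φ with
  | var q =>
      intro pol f w hw
      exact hw [] q pol (by simp [occAt])
  | neg ψ ih =>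
      intro pol f w hw
      have := ih (!pol) (fun l => f (.neg :: l)) w
        (fun l p pol' h => hw (.neg :: l) p pol' h)
      exact ⟨_, this, rfl⟩
  | conj ψ χ ih1 ih2 =>
      intro pol f w hw
      exact Set.mem_image2_of_mem
        (ih1 pol _ w (fun l p pol' h => hw (.left :: l) p pol' h))
        (ih2 pol _ w (fun l p pol' h => hw (.right :: l) p pol' h))

lemma eval_substV_mem (lam : ℕ → Set Bool) (σ : ℕ → ℕ) (w : ℕ → Bool) :
    ∀ φ : Form, (∀ p ∈ vars φ, w (σ p) ∈ lam p) →
    eval w (substV σ φ) ∈ lpEval lam φ := by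
  intro φ
  induction φ with
  | var q => intro hw; exact hw q (by simp [vars])
  | neg ψ ih => intro hw; exact ⟨_, ih hw, rfl⟩
  | conj ψ χ ih1 ih2 =>
      intro hw
      exact Set.mem_image2_of_mem (ih1 fun p hp => hw p (by simp [vars, hp]))
        (ih2 fun p hp => hw p (by simp [vars, hp]))
lemma isOccOf_mem_varsPB {K : PB} {o : Occurrence} {p : ℕ} {pol : Bool}
    (h : IsOccOf K o p pol) : p ∈ varsPB K :=
  Finset.le_sup (f := vars) h.1 (occAt_mem_vars o.1 o.2 true h.2)

lemma muVal_const {lam : ℕ → Set Bool} {p : ℕ} (hne : (lam p).Nonempty)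
    (hu : lam p ≠ Set.univ) (pol pol' : Bool) : muVal lam p pol = muVal lam p pol' := by
  rcases setBool_cases (lam p) with h | h | h | h
  · exact absurd h hne.ne_empty
  · simp [muVal, h]
  · have hne' : lam p ≠ ({false} : Set Bool) := by
      rw [h]; intro hc
      have : true ∈ ({false} : Set Bool) := hc ▸ rfl
      simp at this
    simp [muVal, h, hne']
  · exact absurd h hu

lemma lamRel_equiv (K : PB) (lam : ℕ → Set Bool) : IsEquivOn K (lamRel K lam) := by
  constructor
  · rintro ⟨o, o'⟩ ⟨p, pol, pol', h1, h2, _⟩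
    exact ⟨⟨h1.1, p, pol, h1.2⟩, ⟨h2.1, p, pol', h2.2⟩⟩
  · rintro o ⟨hm, p, pol, hocc⟩
    exact ⟨p, pol, pol, ⟨hm, hocc⟩, ⟨hm, hocc⟩, fun _ => rfl⟩
  · rintro ⟨o, o'⟩ ⟨p, pol, pol', h1, h2, hc⟩
    exact ⟨p, pol', pol, h2, h1, fun hu => (hc hu).symm⟩
  · rintro a b c ⟨p, pol, pol', h1, h2, hc⟩ ⟨p2, pol2, pol2', h3, h4, hc2⟩
    have heq : (p, pol') = (p2, pol2) := Option.some.inj (h2.2.symm.trans h3.2)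
    simp only [Prod.mk.injEq] at heq
    obtain ⟨rfl, rfl⟩ := heq
    exact ⟨p, pol, pol2', h1, h4, fun hu => (hc hu).trans (hc2 hu)⟩

lemma lamRel_compliant (K : PB) (lam : ℕ → Set Bool) : Compliant (lamRel K lam) := by
  rintro ⟨o, o'⟩ ⟨p, pol, pol', h1, h2, _⟩
  exact ⟨p, pol, pol', h1.2, h2.2⟩

lemma lamRel_consistent (K : PB) (R : Occurrence → ℕ) (hR : IsCRenaming K R)
    (lam : ℕ → Set Bool) (hI : IsLPInterp lam) (hM : LPModelPB lam K) :
    RelConsistent K R (lamRel K lam) := by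
  classical
  set w : ℕ → Bool := fun q => if h : ∃ o, IsOcc K o ∧ R o = q then muOf lam h.choose else false
    with hwdef
  have hw : ∀ o, IsOcc K o → w (R o) = muOf lam o := by
    intro o ho
    have hex : ∃ o', IsOcc K o' ∧ R o' = R o := ⟨o, ho, rfl⟩
    show (if h : ∃ o', IsOcc K o' ∧ R o' = R o then muOf lam h.choose else false) = muOf lam o
    rw [dif_pos hex]
    have hspec := hex.choose_spec
    rw [hR.inj _ _ hspec.1 ho hspec.2]
  refine ⟨w, ?_, ?_⟩
  · intro ψ hψ
    refine evalRename_muVal lam ψ true (fun l => R (ψ, l)) w ?_ (hM ψ hψ)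
    intro l p pol' hocc
    rw [hw (ψ, l) ⟨hψ, p, pol', hocc⟩]
    exact muOf_eq hocc
  · rintro ⟨o, o'⟩ ⟨p, pol, pol', h1, h2, hc⟩
    show w (R o) = w (R o')
    rw [hw o ⟨h1.1, p, pol, h1.2⟩, hw o' ⟨h2.1, p, pol', h2.2⟩,
        muOf_eq h1.2, muOf_eq h2.2]
    by_cases hu : lam p = Set.univ
    · rw [hc hu]
    · exact muVal_const (hI p) hu pol pol'

lemma lamRel_max (K : PB) (R : Occurrence → ℕ) (lam : ℕ → Set Bool)
    (hI : IsLPInterp lam) (hM : LPModelPB lam K)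
    (hmin : ∀ lam', IsLPInterp lam' → LPModelPB lam' K → ¬ lpBang lam' ⊂ lpBang lam) :
    ∀ r', IsEquivOn K r' → Compliant r' → RelConsistent K R r' → ¬ lamRel K lam ⊂ r' := by
  classical
  intro r' heq hcomp hcons hsub
  obtain ⟨⟨a, b⟩, hq, hqn⟩ := Set.exists_of_ssubset hsub
  obtain ⟨memA, memB⟩ := heq.dom _ hq
  obtain ⟨p, pa, pb, hA, hB⟩ := hcomp _ hq
  have hnot : ¬ (lam p = Set.univ → pa = pb) := fun hcc =>
    hqn ⟨p, pa, pb, ⟨memA.1, hA⟩, ⟨memB.1, hB⟩, hcc⟩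
  push_neg at hnot
  obtain ⟨huniv, hpab⟩ := hnot
  obtain ⟨w, hwmod, hwconst⟩ := hcons
  set lam' : ℕ → Set Bool := fun q =>
    if q ∈ varsPB K then {v | ∃ o1 pol1, IsOccOf K o1 q pol1 ∧ w (R o1) = v} else lam q
    with hlam'
  have hlam'mem : ∀ q ∈ varsPB K, ∀ o1 pol1, IsOccOf K o1 q pol1 → w (R o1) ∈ lam' q := by
    intro q hqv o1 pol1 hocc
    simp only [hlam', if_pos hqv]
    exact ⟨o1, pol1, hocc, rfl⟩
  have hI' : IsLPInterp lam' := by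
    intro q
    by_cases hqv : q ∈ varsPB K
    · obtain ⟨ψ, hψ, hqvars⟩ := Finset.mem_sup.mp hqv
      obtain ⟨l, pol', hocc⟩ := mem_vars_occAt ψ hqvars true
      exact ⟨w (R (ψ, l)), hlam'mem q hqv (ψ, l) pol' ⟨hψ, hocc⟩⟩
    · simp only [hlam', if_neg hqv]
      exact hI q
  have hM' : LPModelPB lam' K := by
    intro ψ hψ
    have hmem := evalRename_mem lam' ψ true (fun l => R (ψ, l)) w ?_
    · have h2 : eval w (renameBy (fun l => R (ψ, l)) ψ) = true := hwmod ψ hψ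
      rw [h2] at hmem
      exact hmem
    · intro l p1 pol1 hocc
      have hocc' : IsOccOf K (ψ, l) p1 pol1 := ⟨hψ, hocc⟩
      exact hlam'mem p1 (isOccOf_mem_varsPB hocc') (ψ, l) pol1 hocc'
  have hallp : ∀ o1 pol1, IsOccOf K o1 p pol1 → w (R o1) = w (R a) := by
    intro o1 pol1 hocc
    by_cases hp1 : pol1 = pa
    · exact hwconst (o1, a) (hsub.1 ⟨p, pol1, pa, hocc, ⟨memA.1, hA⟩, fun _ => hp1⟩)
    · have hp1b : pol1 = pb := by
        cases pol1 <;> cases pa <;> cases pb <;> simp_all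
      have h1 : (o1, b) ∈ r' := hsub.1 ⟨p, pol1, pb, hocc, ⟨memB.1, hB⟩, fun _ => hp1b⟩
      have h2 : (b, a) ∈ r' := heq.symm _ hq
      exact hwconst (o1, a) (heq.trans o1 b a h1 h2)
  have hbangsub : lpBang lam' ⊆ lpBang lam := by
    intro q hq'
    have hq'univ : lam' q = Set.univ := hq'
    by_cases hqv : q ∈ varsPB K
    · by_contra hql
      have hqne : lam q ≠ Set.univ := hql
      have hf : (false : Bool) ∈ lam' q := hq'univ ▸ Set.mem_univ _
      have ht : (true : Bool) ∈ lam' q := hq'univ ▸ Set.mem_univ _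
      simp only [hlam', if_pos hqv] at hf ht
      obtain ⟨o1, pol1, hocc1, hw1⟩ := hf
      obtain ⟨o2, pol2, hocc2, hw2⟩ := ht
      have : (o1, o2) ∈ lamRel K lam :=
        ⟨q, pol1, pol2, hocc1, hocc2, fun hu => absurd hu hqne⟩
      have := hwconst (o1, o2) (hsub.1 this)
      rw [hw1, hw2] at this
      exact Bool.false_ne_true this
    · show lam q = Set.univ
      rw [← hq'univ]
      simp [hlam', if_neg hqv]
  have hpv : p ∈ varsPB K := isOccOf_mem_varsPB (⟨memA.1, hA⟩ : IsOccOf K a p pa)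
  have hpnot : p ∉ lpBang lam' := by
    intro hp'
    have hp'univ : lam' p = Set.univ := hp'
    have hf : (false : Bool) ∈ lam' p := hp'univ ▸ Set.mem_univ _
    have ht : (true : Bool) ∈ lam' p := hp'univ ▸ Set.mem_univ _
    simp only [hlam', if_pos hpv] at hf ht
    obtain ⟨o1, pol1, hocc1, hw1⟩ := hf
    obtain ⟨o2, pol2, hocc2, hw2⟩ := ht
    have e1 := hallp o1 pol1 hocc1
    have e2 := hallp o2 pol2 hocc2
    rw [hw1] at e1; rw [hw2] at e2
    exact Bool.false_ne_true (e1.trans e2.symm)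
  exact hmin lam' hI' hM'
    ((Set.ssubset_iff_of_subset hbangsub).mpr ⟨p, huniv, hpnot⟩)
/-- Whether a variable's occurrence class under `lamRel` is "full". -/
def FullVar (K : PB) (lam : ℕ → Set Bool) (p : ℕ) : Prop :=
  lam p ≠ Set.univ ∨
    ∀ o1 pol1 o2 pol2, IsOccOf K o1 p pol1 → IsOccOf K o2 p pol2 → pol1 = pol2

open scoped Classical in
noncomputable def rhoOf (K : PB) (lam : ℕ → Set Bool) (N : ℕ) (o : Occurrence) : ℕ :=
  match occAt o.1 o.2 true with
  | some (p, pol) =>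
      if FullVar K lam p then p
      else N + 2 * p + pol.toNat
  | none => 0

open scoped Classical in
lemma rhoOf_eq {K : PB} {lam : ℕ → Set Bool} {N : ℕ} {o : Occurrence} {p : ℕ} {pol : Bool}
    (h : occAt o.1 o.2 true = some (p, pol)) :
    rhoOf K lam N o =
      if FullVar K lam p then p else N + 2 * p + pol.toNat := by
  simp [rhoOf, h]

lemma isClassRenaming_rhoOf (K : PB) (lam : ℕ → Set Bool) (N : ℕ)
    (hN : ∀ p ∈ varsPB K, p < N) :
    IsClassRenaming K (lamRel K lam) (rhoOf K lam N) := by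
  classical
  constructor
  · intro o o' ho ho'
    obtain ⟨p, pol, hA⟩ := ho.2
    obtain ⟨p', pol', hB⟩ := ho'.2
    rw [rhoOf_eq hA, rhoOf_eq hB]
    have hpN : p < N := hN p (isOccOf_mem_varsPB ⟨ho.1, hA⟩)
    have hp'N : p' < N := hN p' (isOccOf_mem_varsPB ⟨ho'.1, hB⟩)
    constructor
    · intro hrho
      by_cases F : FullVar K lam p <;> by_cases F' : FullVar K lam p'
      · rw [if_pos F, if_pos F'] at hrho
        subst hrho
        refine ⟨p, pol, pol', ⟨ho.1, hA⟩, ⟨ho'.1, hB⟩, fun hu => ?_⟩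
        rcases F with F | F
        · exact absurd hu F
        · exact F o pol o' pol' ⟨ho.1, hA⟩ ⟨ho'.1, hB⟩
      · rw [if_pos F, if_neg F'] at hrho
        exfalso
        cases pol' <;> simp at hrho <;> omega
      · rw [if_neg F, if_pos F'] at hrho
        exfalso
        cases pol <;> simp at hrho <;> omega
      · rw [if_neg F, if_neg F'] at hrho
        have hpp : p = p' ∧ pol = pol' := by
          cases pol <;> cases pol' <;> simp at hrho <;>
            first
            | exact ⟨by omega, rfl⟩
            | (exfalso; omega)
        obtain ⟨rfl, rfl⟩ := hpp
        exact ⟨p, pol, pol, ⟨ho.1, hA⟩, ⟨ho'.1, hB⟩, fun _ => rfl⟩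
    · rintro ⟨p0, pol0, pol0', h1, h2, hc⟩
      have e1 : (p0, pol0) = (p, pol) := Option.some.inj (h1.2.symm.trans hA)
      have e2 : (p0, pol0') = (p', pol') := Option.some.inj (h2.2.symm.trans hB)
      simp only [Prod.mk.injEq] at e1 e2
      obtain ⟨rfl, rfl⟩ := e1
      obtain ⟨rfl, rfl⟩ := e2
      by_cases F : FullVar K lam p0
      · rw [if_pos F, if_pos F]
      · rw [if_neg F, if_neg F]
        have hu : lam p0 = Set.univ := by
          by_contra hu
          exact F (Or.inl hu)
        rw [hc hu]
  · intro o p hov hall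
    obtain ⟨pol, hocc⟩ := hov
    rw [rhoOf_eq hocc.2]
    by_cases F : FullVar K lam p
    · rw [if_pos F]
    · exfalso
      unfold FullVar at F
      push_neg at F
      obtain ⟨hu, o1, pol1, o2, pol2, hocc1, hocc2, hne⟩ := F
      have key : ∀ o3 pol3, IsOccOf K o3 p pol3 → pol = pol3 := by
        intro o3 pol3 hocc3
        obtain ⟨pz, polz, polz', hz1, hz2, hcz⟩ := hall o3 ⟨pol3, hocc3⟩
        have e1 : (pz, polz) = (p, pol) := Option.some.inj (hz1.2.symm.trans hocc.2)
        have e2 : (pz, polz') = (p, pol3) := Option.some.inj (hz2.2.symm.trans hocc3.2)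
        simp only [Prod.mk.injEq] at e1 e2
        obtain ⟨rfl, rfl⟩ := e1
        rw [← e2.2]
        exact hcz hu
      exact hne ((key o1 pol1 hocc1).symm.trans (key o2 pol2 hocc2))
theorem inf1_implies_LPm_aux (K : PB) (R : Occurrence → ℕ) (hR : IsCRenaming K R)
    (φ : Form) (h : Inf1 K R φ) : LPmEntails K φ := by
  classical
  intro lam hlam
  obtain ⟨hI, hM, hmin⟩ := hlam
  have hMCR : IsMCR K R (lamRel K lam) :=
    ⟨lamRel_equiv K lam, lamRel_compliant K lam,
     lamRel_consistent K R hR lam hI hM, lamRel_max K R lam hI hM hmin⟩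
  set N := ((varsPB K ∪ vars φ).sup id) + 1 with hNdef
  have hN1 : ∀ p ∈ varsPB K, p < N := fun p hp =>
    Nat.lt_succ_of_le (Finset.le_sup (f := id) (Finset.mem_union_left _ hp))
  have hN2 : ∀ p ∈ vars φ, p < N := fun p hp =>
    Nat.lt_succ_of_le (Finset.le_sup (f := id) (Finset.mem_union_right _ hp))
  have hCR := isClassRenaming_rhoOf K lam N hN1
  obtain ⟨σ, hts, hent⟩ := h (lamRel K lam) (rhoOf K lam N) hMCR hCR
  set w : ℕ → Bool := fun q =>
    if q < N then
      (if lam q = Set.univ then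
        (if ∃ o1, IsOccOf K o1 q true then true else false)
       else (if true ∈ lam q then true else false))
    else decide ((q - N) % 2 = 1) with hwdef
  have hwval : ∀ p < N, w p =
      (if lam p = Set.univ then
        (if ∃ o1, IsOccOf K o1 p true then true else false)
       else (if true ∈ lam p then true else false)) := by
    intro p hp
    show (if p < N then _ else _) = _
    rw [if_pos hp]
  have hwρ : ∀ o p pol, IsOccOf K o p pol → w (rhoOf K lam N o) = muVal lam p pol := by
    intro o p pol hocc
    rw [rhoOf_eq hocc.2]
    by_cases F : FullVar K lam p
    · rw [if_pos F]
      have hpN : p < N := hN1 p (isOccOf_mem_varsPB hocc)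
      rw [hwval p hpN]
      rcases setBool_cases (lam p) with hc | hc | hc | hc
      · exact absurd hc (hI p).ne_empty
      · have hu : lam p ≠ Set.univ := fun hcc => univ_ne_false (hcc ▸ hc)
        have hft : true ∉ lam p := by rw [hc]; simp
        rw [if_neg hu, if_neg hft]
        simp [muVal, hc]
      · have hu : lam p ≠ Set.univ := fun hcc => univ_ne_true (hcc ▸ hc)
        have hft : true ∈ lam p := by rw [hc]; simp
        rw [if_neg hu, if_pos hft]
        have hne' : lam p ≠ ({false} : Set Bool) := by
          rw [hc]; intro hcc
          have : true ∈ ({false} : Set Bool) := hcc ▸ rfl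
          simp at this
        simp [muVal, hne', hc]
      · rw [if_pos hc, muVal_of_univ hc]
        rcases F with F | F
        · exact absurd hc F
        · cases pol with
          | true => rw [if_pos ⟨o, hocc⟩]
          | false =>
              rw [if_neg ?_]
              rintro ⟨o1, hocc1⟩
              exact Bool.noConfusion (F o1 true o false hocc1 hocc)
    · rw [if_neg F]
      have hge : ¬ (N + 2 * p + pol.toNat < N) := by cases pol <;> simp <;> omega
      have : w (N + 2 * p + pol.toNat) = decide ((N + 2 * p + pol.toNat - N) % 2 = 1) := by
        show (if _ < N then _ else _) = _
        rw [if_neg hge]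
      rw [this]
      have hu : lam p = Set.univ := by
        by_contra hu
        exact F (Or.inl hu)
      rw [muVal_of_univ hu]
      cases pol with
      | true => simp only [decide_eq_true_eq]; simp only [Bool.toNat_true]; omega
      | false =>
          simp only [Bool.toNat_false, decide_eq_false_iff_not]
          omega
  have hwmod : ∀ ψ ∈ K, eval w (renameForm (rhoOf K lam N) ψ) = true := by
    intro ψ hψ
    exact evalRename_muVal lam ψ true (fun l => rhoOf K lam N (ψ, l)) w
      (fun l p pol' hh => hwρ (ψ, l) p pol' ⟨hψ, hh⟩) (hM ψ hψ)
  have hev : eval w (substV σ φ) = true := hent w hwmod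
  have hmem : ∀ p ∈ vars φ, w (σ p) ∈ lam p := by
    intro p hp
    by_cases hpv : p ∈ varsPB K
    · obtain ⟨o, ⟨pol, hocc⟩, hσ⟩ := hts.1 p hpv hp
      rw [hσ, hwρ o p pol hocc]
      exact muVal_mem (hI p) pol
    · rw [hts.2 p (fun hc => hpv hc.1)]
      rw [hwval p (hN2 p hp)]
      by_cases hu : lam p = Set.univ
      · rw [hu]; exact Set.mem_univ _
      · rw [if_neg hu]
        by_cases hft : true ∈ lam p
        · rw [if_pos hft]; exact hft
        · rw [if_neg hft]
          obtain ⟨v, hv⟩ := hI p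
          cases v with
          | true => exact absurd hv hft
          | false => exact hv
  have hfinal := eval_substV_mem lam σ w φ hmem
  rw [hev] at hfinal
  exact hfinal
end Occ
/-- Theorem 4: `K ⊩₁ φ` implies `K ⊢_{LPm} φ`. -/
theorem inf1_implies_LPm (K : Occ.PB)
    (R : Occ.Occurrence → ℕ) (hR : Occ.IsCRenaming K R)
    (φ : Occ.Form) (h : Occ.Inf1 K R φ) :
    Occ.LPmEntails K φ :=
  Occ.inf1_implies_LPm_aux K R hR φ h
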